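/- Let X ∈ U(n, 2^s) be a balanced two-level lattice design with n ≥ 2, and map each entry to z_{ij} = (2 x_{ij} + 1)/4 ∈ {1/4, 3/4}. Then WL2²(X) − a_2 = (2/n²)(5/4)^s ∑_{1 ≤ i < k ≤ n} (6/5)^{β(x_i, x_k)} ≥ ((n−1)(5+f)/(5n)) (5/4)^s (6/5)^θ, where a_2 = (1/n)(3/2)^s − (4/3)^s, β̄ = s(n−2)/(2(n−1)), θ = ⌊β̄⌋ and f = β̄ − θ. -/

import Mathlib

open Finset

/-- The coincidence number β(x, w) = #{j : x_j = w_j} of two lattice points. -/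
def coincidence {s q : ℕ} (x w : Fin s → Fin q) : ℕ :=
  (univ.filter fun j => x j = w j).card

/-- A design `X ∈ U(n, q^s)` is balanced: `q ∣ n` and every level occurs exactly
`n / q` times in each column; here `q = 2`. -/
def IsBalanced {n s q : ℕ} (X : Fin n → Fin s → Fin q) : Prop :=
  q ∣ n ∧ ∀ (j : Fin s) (ℓ : Fin q),
    (univ.filter fun i => X i j = ℓ).card = n / q

/-- The index set of pairs 1 ≤ i < k ≤ n. -/
def pairs (n : ℕ) : Finset (Fin n × Fin n) := univ.filter fun p => p.1 < p.2

/-- The design points mapped to [0,1]: z_{ij} = (2 x_{ij} + 1)/4 ∈ {1/4, 3/4}. -/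
noncomputable def zpt2 {n s : ℕ} (X : Fin n → Fin s → Fin 2) (i : Fin n) (j : Fin s) : ℝ :=
  (2 * ((X i j : ℕ) : ℝ) + 1) / 4

/-- The squared wrap-around L₂-discrepancy of the induced point set. -/
noncomputable def WL2sq {n s : ℕ} (X : Fin n → Fin s → Fin 2) : ℝ :=
  -(4 / 3 : ℝ) ^ s
    + 1 / (n : ℝ) ^ 2 * ∑ i, ∑ k, ∏ j,
        (3 / 2 - |zpt2 X i j - zpt2 X k j| * (1 - |zpt2 X i j - zpt2 X k j|))

/- ### Auxiliary lemmas -/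

lemma sum_split_aux {M : Type*} [AddCommMonoid M] (n : ℕ) (F : Fin n → Fin n → M)
    (hsymm : ∀ i k, F i k = F k i) :
    ∑ i, ∑ k, F i k = (∑ i, F i i) + (∑ p ∈ pairs n, F p.1 p.2 + ∑ p ∈ pairs n, F p.1 p.2) := by
  rw [← Finset.sum_product' univ univ F]
  rw [← Finset.sum_filter_add_sum_filter_not (univ ×ˢ univ) (fun p => p.1 < p.2)]
  rw [← Finset.sum_filter_add_sum_filter_not (filter (fun p => ¬ p.1 < p.2) (univ ×ˢ univ)) (fun p => p.1 = p.2)]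
  have h1 : (filter (fun p => p.1 < p.2) (univ ×ˢ univ) : Finset (Fin n × Fin n)) = pairs n := by
    simp [pairs, Finset.univ_product_univ]
  have h2 : (filter (fun p => p.1 = p.2) (filter (fun p : Fin n × Fin n => ¬ p.1 < p.2) (univ ×ˢ univ)))
      = Finset.univ.image (fun i : Fin n => (i, i)) := by
    ext p
    simp only [mem_filter, mem_image, mem_univ, true_and, Finset.mem_product]
    constructor
    · rintro ⟨_, h⟩; exact ⟨p.1, by rw [Prod.ext_iff]; exact ⟨rfl, h⟩⟩
    · rintro ⟨i, rfl⟩; simp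
  have h3 : ∑ p ∈ (filter (fun p => p.1 = p.2) (filter (fun p : Fin n × Fin n => ¬ p.1 < p.2) (univ ×ˢ univ))), F p.1 p.2 = ∑ i, F i i := by
    rw [h2, Finset.sum_image (by intro a _ b _ h; exact (Prod.ext_iff.mp h).1)]
  have h4 : ∑ p ∈ (filter (fun p => ¬ p.1 = p.2) (filter (fun p : Fin n × Fin n => ¬ p.1 < p.2) (univ ×ˢ univ))), F p.1 p.2
      = ∑ p ∈ pairs n, F p.1 p.2 := by
    apply Finset.sum_nbij' (fun p => Prod.swap p) (fun p => Prod.swap p)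
    · intro a ha
      rw [mem_filter, mem_filter] at ha
      rw [pairs, mem_filter]
      exact ⟨mem_univ _, lt_of_le_of_ne (not_lt.mp ha.1.2) (fun h => ha.2 h.symm)⟩
    · intro a ha
      rw [pairs, mem_filter] at ha
      rw [mem_filter, mem_filter]
      refine ⟨⟨by simp, not_lt.mpr (le_of_lt ha.2)⟩, ?_⟩
      simp only [Prod.fst_swap, Prod.snd_swap]
      exact ne_of_gt ha.2
    · intro a _; exact Prod.swap_swap a
    · intro a _; exact Prod.swap_swap a
    · intro a _; exact hsymm a.1 a.2
  rw [h1, h3, h4]; rw [add_comm (∑ x ∈ pairs n, F x.1 x.2), add_assoc]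

lemma coincidence_le' {s q : ℕ} (x w : Fin s → Fin q) : coincidence x w ≤ s := by
  simpa [coincidence] using Finset.card_filter_le (univ : Finset (Fin s)) (fun j => x j = w j)

lemma coincidence_comm' {s q : ℕ} (x w : Fin s → Fin q) : coincidence x w = coincidence w x := by
  unfold coincidence; congr 1; apply Finset.filter_congr; intro j _; simp [eq_comm]

lemma coincidence_self' {s q : ℕ} (x : Fin s → Fin q) : coincidence x x = s := by
  simp [coincidence]

lemma prod_term {n s : ℕ} (X : Fin n → Fin s → Fin 2) (i k : Fin n) :
    ∏ j, (3 / 2 - |zpt2 X i j - zpt2 X k j| * (1 - |zpt2 X i j - zpt2 X k j|))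
      = (5 / 4 : ℝ) ^ s * (6 / 5 : ℝ) ^ coincidence (X i) (X k) := by
  have h : ∀ j, (3 / 2 - |zpt2 X i j - zpt2 X k j| * (1 - |zpt2 X i j - zpt2 X k j|))
      = if X i j = X k j then (3 / 2 : ℝ) else 5 / 4 := by
    intro j
    unfold zpt2
    rcases h1 : X i j with ⟨a, ha⟩
    rcases h2 : X k j with ⟨b, hb⟩
    have habs : ∀ x : ℝ, (x = 1/2 ∨ x = -(1/2)) → 3/2 - |x| * (1 - |x|) = 5/4 := by
      rintro x (rfl | rfl)
      · rw [show |(1/2:ℝ)| = 1/2 from abs_of_nonneg (by norm_num)]; norm_num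
      · rw [show |(-(1/2):ℝ)| = 1/2 by rw [abs_neg]; exact abs_of_nonneg (by norm_num)]; norm_num
    interval_cases a <;> interval_cases b <;> simp [Fin.ext_iff] <;> exact habs _ (by norm_num)
  simp only [h]
  rw [Finset.prod_ite (fun _ => (3/2 : ℝ)) (fun _ => (5/4 : ℝ)), Finset.prod_const, Finset.prod_const]
  have hle := coincidence_le' (X i) (X k)
  have hcard : (filter (fun j => ¬ X i j = X k j) univ).card = s - coincidence (X i) (X k) := by
    have h2 := Finset.card_filter_add_card_filter_not (s := (univ : Finset (Fin s)))
      (p := fun j => X i j = X k j)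
    have hc : (filter (fun j => X i j = X k j) univ).card = coincidence (X i) (X k) := rfl
    simp only [Finset.card_univ, Fintype.card_fin, hc] at h2
    omega
  rw [hcard, show #(filter (fun x => X i x = X k x) univ) = coincidence (X i) (X k) from rfl]
  set b := coincidence (X i) (X k) with hb
  have h54 : (5/4:ℝ)^s = (5/4:ℝ)^b * (5/4:ℝ)^(s-b) := by rw [← pow_add]; congr 1; omega
  have h32 : (3 / 2 : ℝ) ^ b = (5 / 4 : ℝ) ^ b * (6 / 5 : ℝ) ^ b := by
    rw [← mul_pow]; norm_num
  rw [h54, h32]; ring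

lemma sum_coincidence {n s : ℕ} (X : Fin n → Fin s → Fin 2) (hX : IsBalanced X) :
    ∑ i, ∑ k, coincidence (X i) (X k) = s * (n * (n / 2)) := by
  have h : ∀ i k : Fin n, coincidence (X i) (X k) = ∑ j, if X i j = X k j then 1 else 0 :=
    fun i k => Finset.card_filter _ _
  simp only [h]
  calc ∑ i, ∑ k, ∑ j, (if X i j = X k j then (1:ℕ) else 0)
      = ∑ i, ∑ j, ∑ k, (if X i j = X k j then (1:ℕ) else 0) :=
        Finset.sum_congr rfl fun i _ => Finset.sum_comm
    _ = ∑ _i : Fin n, ∑ _j : Fin s, n / 2 := by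
        refine Finset.sum_congr rfl fun i _ => Finset.sum_congr rfl fun j _ => ?_
        rw [← Finset.card_filter]
        have he : (filter (fun k => X i j = X k j) univ) = (filter (fun k => X k j = X i j) univ) := by
          apply Finset.filter_congr; intro k _; simp [eq_comm]
        rw [he, hX.2 j (X i j)]
    _ = s * (n * (n / 2)) := by simp [Finset.sum_const, Finset.card_univ]; ring

lemma key_convex (θ b : ℕ) :
    (6/5 : ℝ) ^ θ * (1 + ((b:ℝ) - θ)/5) ≤ (6/5 : ℝ) ^ b := by
  have hpos : ∀ c : ℕ, (0:ℝ) < (6/5 : ℝ) ^ c := fun c => by positivity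
  rcases le_or_gt θ b with h | h
  · have hbern : 1 + ((b - θ : ℕ) : ℝ) * (1/5) ≤ (1 + 1/5 : ℝ) ^ (b - θ) :=
      one_add_mul_le_pow (by norm_num) _
    have h1 : (1 + ((b:ℝ) - θ)/5) ≤ (6/5 : ℝ) ^ (b - θ) := by
      have hc : ((b - θ : ℕ) : ℝ) = (b:ℝ) - θ := by
        have := Nat.cast_sub h (R := ℝ); linarith [this]
      calc (1 + ((b:ℝ) - θ)/5) = 1 + ((b - θ : ℕ) : ℝ) * (1/5) := by rw [hc]; ring
        _ ≤ (1 + 1/5 : ℝ) ^ (b - θ) := hbern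
        _ = (6/5 : ℝ) ^ (b - θ) := by norm_num
    calc (6/5 : ℝ) ^ θ * (1 + ((b:ℝ) - θ)/5) ≤ (6/5 : ℝ) ^ θ * (6/5 : ℝ) ^ (b - θ) :=
          mul_le_mul_of_nonneg_left h1 (le_of_lt (hpos θ))
      _ = (6/5 : ℝ) ^ b := by rw [← pow_add]; congr 1; omega
  · have hk : θ = b + (θ - b) := by omega
    set k := θ - b with hkdef
    have hbern : 1 + (k : ℝ) * (-(1/6)) ≤ (1 + (-(1/6)) : ℝ) ^ k :=
      one_add_mul_le_pow (by norm_num) _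
    have h56 : (1 - (k:ℝ)/6) ≤ (5/6 : ℝ) ^ k := by
      calc (1 - (k:ℝ)/6) = 1 + (k : ℝ) * (-(1/6)) := by ring
        _ ≤ (1 + (-(1/6)) : ℝ) ^ k := hbern
        _ = (5/6 : ℝ) ^ k := by norm_num
    have hcast : ((b:ℝ) - θ) = -(k:ℝ) := by
      rw [hk]; push_cast; ring
    rw [hcast, hk, pow_add]
    have hgoal : (6/5 : ℝ) ^ k * (1 + -(k:ℝ)/5) ≤ 1 := by
      have h1 : 1 + -(k:ℝ)/5 ≤ (5/6:ℝ)^k := by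
        calc 1 + -(k:ℝ)/5 = 1 - (k:ℝ)/5 := by ring
          _ ≤ 1 - (k:ℝ)/6 := by
              have : (0:ℝ) ≤ (k:ℝ) := Nat.cast_nonneg k
              linarith
          _ ≤ (5/6 : ℝ) ^ k := h56
      calc (6/5 : ℝ) ^ k * (1 + -(k:ℝ)/5) ≤ (6/5 : ℝ) ^ k * (5/6:ℝ)^k :=
            mul_le_mul_of_nonneg_left h1 (le_of_lt (hpos k))
        _ = 1 := by rw [← mul_pow]; norm_num
    calc (6/5 : ℝ) ^ b * (6/5:ℝ) ^ k * (1 + -(k:ℝ)/5)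
        = (6/5 : ℝ) ^ b * ((6/5:ℝ) ^ k * (1 + -(k:ℝ)/5)) := by ring
      _ ≤ (6/5 : ℝ) ^ b * 1 := mul_le_mul_of_nonneg_left hgoal (le_of_lt (hpos b))
      _ = (6/5 : ℝ) ^ b := mul_one _

/-- Corollary 1 (two-level, wrap-around L₂-discrepancy):
WL₂²(X) − a₂ = (2/n²)(5/4)ˢ ∑_{i<k} (6/5)^{β(x_i,x_k)}
             ≥ ((n−1)(5+f)/(5n)) (5/4)ˢ (6/5)^θ. -/
theorem WL2sq_identity_and_bound_two_level (n s : ℕ) (hn : 2 ≤ n)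
    (X : Fin n → Fin s → Fin 2) (hX : IsBalanced X)
    (a₂ : ℝ) (ha₂ : a₂ = 1 / (n : ℝ) * (3 / 2 : ℝ) ^ s - (4 / 3 : ℝ) ^ s)
    (βbar : ℝ) (hβbar : βbar = (s : ℝ) * ((n : ℝ) - 2) / (2 * ((n : ℝ) - 1)))
    (θ : ℕ) (hθ : θ = ⌊βbar⌋₊)
    (f : ℝ) (hf : f = βbar - θ) :
    WL2sq X - a₂ = 2 / (n : ℝ) ^ 2 * (5 / 4 : ℝ) ^ s *
        ∑ p ∈ pairs n, (6 / 5 : ℝ) ^ coincidence (X p.1) (X p.2) ∧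
      2 / (n : ℝ) ^ 2 * (5 / 4 : ℝ) ^ s *
          ∑ p ∈ pairs n, (6 / 5 : ℝ) ^ coincidence (X p.1) (X p.2)
        ≥ ((n : ℝ) - 1) * (5 + f) / (5 * n) * (5 / 4 : ℝ) ^ s * (6 / 5 : ℝ) ^ θ := by
  obtain ⟨hdvd, hbal⟩ := hX
  obtain ⟨m, hm⟩ := hdvd
  have hm1 : 1 ≤ m := by omega
  have hdiv : n / 2 = m := by omega
  have hn0 : (n:ℝ) ≠ 0 := by
    have : (0:ℝ) < n := by exact_mod_cast Nat.lt_of_lt_of_le (by norm_num) hn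
    linarith
  have hn1 : (n:ℝ) - 1 ≠ 0 := by
    have h2 : (2:ℝ) ≤ n := by exact_mod_cast hn
    intro h; linarith
  set SS := ∑ p ∈ pairs n, (6/5:ℝ) ^ coincidence (X p.1) (X p.2) with hSS
  set T := ∑ p ∈ pairs n, coincidence (X p.1) (X p.2) with hTdef
  set N := (pairs n).card with hNdef
  -- counting facts
  have hTsum : (∑ i, ∑ k, coincidence (X i) (X k)) = n * s + (T + T) := by
    rw [sum_split_aux n _ (fun i k => coincidence_comm' (X i) (X k))]
    simp [coincidence_self', Finset.sum_const, Finset.card_univ]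
    rfl
  have hTeq : n * s + (T + T) = s * (n * m) := by
    rw [← hTsum, sum_coincidence X ⟨⟨m, hm⟩, hbal⟩, hdiv]
  have hNeq : n * n = n + (N + N) := by
    have h := sum_split_aux n (fun _ _ => (1:ℕ)) (fun _ _ => rfl)
    simpa [Finset.sum_const, Finset.card_univ, hNdef] using h
  -- the identity
  have hprodsum : (∑ i, ∑ k, ∏ j,
        (3 / 2 - |zpt2 X i j - zpt2 X k j| * (1 - |zpt2 X i j - zpt2 X k j|)))
      = (n:ℝ) * (3/2:ℝ)^s + ((5/4:ℝ)^s * SS + (5/4:ℝ)^s * SS) := by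
    have hcong : (∑ i, ∑ k, ∏ j,
        (3 / 2 - |zpt2 X i j - zpt2 X k j| * (1 - |zpt2 X i j - zpt2 X k j|)))
        = ∑ i, ∑ k, (5/4:ℝ)^s * (6/5:ℝ)^coincidence (X i) (X k) := by
      refine Finset.sum_congr rfl fun i _ => Finset.sum_congr rfl fun k _ => prod_term X i k
    rw [hcong, sum_split_aux n (fun i k => (5/4:ℝ)^s * (6/5:ℝ)^coincidence (X i) (X k))
      (fun i k => by rw [coincidence_comm' (X i) (X k)])]
    congr 1
    · simp only [coincidence_self', Finset.sum_const, Finset.card_univ, Fintype.card_fin,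
        nsmul_eq_mul]
      have : (5/4:ℝ)^s * (6/5:ℝ)^s = (3/2:ℝ)^s := by rw [← mul_pow]; norm_num
      rw [this]
    · rw [← Finset.mul_sum, hSS]
  have identity : WL2sq X - a₂ = 2 / (n : ℝ) ^ 2 * (5 / 4 : ℝ) ^ s * SS := by
    rw [WL2sq, hprodsum, ha₂]
    field_simp
    ring
  refine ⟨identity, ?_⟩
  -- the bound
  have hSge : (6/5:ℝ)^θ * ((N:ℝ) + ((T:ℝ) - (N:ℝ)*θ)/5) ≤ SS := by
    have hp : ∀ p ∈ pairs n,
        (6/5:ℝ)^θ * (1 + ((coincidence (X p.1) (X p.2) : ℝ) - θ)/5)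
          ≤ (6/5:ℝ) ^ coincidence (X p.1) (X p.2) := fun p _ => key_convex θ _
    calc (6/5:ℝ)^θ * ((N:ℝ) + ((T:ℝ) - (N:ℝ)*θ)/5)
        = ∑ p ∈ pairs n, (6/5:ℝ)^θ * (1 + ((coincidence (X p.1) (X p.2) : ℝ) - θ)/5) := by
          rw [← Finset.mul_sum]
          congr 1
          rw [Finset.sum_add_distrib, Finset.sum_const, ← Finset.sum_div, Finset.sum_sub_distrib,
            Finset.sum_const]
          have hc : ((T:ℝ)) = ∑ p ∈ pairs n, ((coincidence (X p.1) (X p.2) : ℝ)) := by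
            rw [hTdef]; push_cast; rfl
          rw [← hc, ← hNdef]
          simp [nsmul_eq_mul]
      _ ≤ SS := Finset.sum_le_sum hp
  -- real-number counting facts
  have hNr : (N:ℝ) * 2 = (n:ℝ) * n - n := by
    have := hNeq
    have hc := congrArg (fun x : ℕ => (x:ℝ)) this
    push_cast at hc; linarith
  have hTr : (T:ℝ) * 2 = (s:ℝ) * ((n:ℝ) * m) - (n:ℝ) * s := by
    have hc := congrArg (fun x : ℕ => (x:ℝ)) hTeq
    push_cast at hc; linarith
  have hmr : (m:ℝ) = (n:ℝ)/2 := by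
    have h2 := congrArg (fun x : ℕ => (x:ℝ)) hm
    push_cast at h2
    have : (n:ℝ) = 2 * m := h2
    linarith
  have heq : 2 / (n : ℝ) ^ 2 * (5 / 4 : ℝ) ^ s * ((6/5:ℝ)^θ * ((N:ℝ) + ((T:ℝ) - (N:ℝ)*θ)/5))
      = ((n : ℝ) - 1) * (5 + f) / (5 * n) * (5 / 4 : ℝ) ^ s * (6 / 5 : ℝ) ^ θ := by
    subst hf; subst hβbar
    have hNval : (N:ℝ) = ((n:ℝ) * n - n)/2 := by linarith
    have hTval : (T:ℝ) = ((s:ℝ) * ((n:ℝ) * ((n:ℝ)/2)) - (n:ℝ) * s)/2 := by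
      rw [hmr] at hTr; linarith
    rw [hNval, hTval]
    field_simp
  rw [ge_iff_le, ← heq]
  have hc0 : (0:ℝ) ≤ 2 / (n : ℝ) ^ 2 * (5 / 4 : ℝ) ^ s := by positivity
  calc 2 / (n : ℝ) ^ 2 * (5 / 4 : ℝ) ^ s * ((6/5:ℝ)^θ * ((N:ℝ) + ((T:ℝ) - (N:ℝ)*θ)/5))
      ≤ 2 / (n : ℝ) ^ 2 * (5 / 4 : ℝ) ^ s * SS := mul_le_mul_of_nonneg_left hSge hc0
    _ = 2 / (n : ℝ) ^ 2 * (5 / 4 : ℝ) ^ s * SS := rfl
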